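/- arXiv:2002.10206 — 2 statements merged into one kernel-verified Lean document; each statement's English description precedes it below -/
import Mathlib

section
/- For a standard normal distribution function Φ, the inequality (1/√(2π))·∫_{−x}^{x} e^{−s²/2} ds > √(1 − e^{−x²/2}) holds for all x > 0. -/
open Real MeasureTheory intervalIntegral Filter Set Topology

noncomputable def Agi (x : ℝ) : ℝ := ∫ s in (0:ℝ)..x, Real.exp (-s^2/2)

lemma contF : Continuous fun s : ℝ => Real.exp (-s^2/2) := by continuity

lemma intF : MeasureTheory.Integrable fun s : ℝ => Real.exp (-s^2/2) := by
  have h := integrable_exp_neg_mul_sq (by norm_num : (0:ℝ) < 1/2)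
  convert h using 2 with s
  ring_nf

lemma hAd (x : ℝ) : HasDerivAt Agi (Real.exp (-x^2/2)) x :=
  integral_hasDerivAt_right (intF.intervalIntegrable)
    (contF.stronglyMeasurableAtFilter _ _) contF.continuousAt

lemma contA : Continuous Agi :=
  continuous_iff_continuousAt.mpr fun x => (hAd x).continuousAt

lemma Agi_zero : Agi 0 = 0 := intervalIntegral.integral_same

lemma Agi_mono : StrictMono Agi :=
  strictMono_of_deriv_pos fun t => by rw [(hAd t).deriv]; exact Real.exp_pos _

lemma hAlim : Tendsto Agi atTop (𝓝 (Real.sqrt (2*Real.pi)/2)) := by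
  have h := intervalIntegral_tendsto_integral_Ioi (μ := volume) 0 intF.integrableOn
    (tendsto_id (α := ℝ))
  have e : ∫ s in Ioi (0:ℝ), Real.exp (-s^2/2) = Real.sqrt (2*Real.pi)/2 := by
    have := integral_gaussian_Ioi (1/2)
    rw [show Real.pi / (1/2) = 2*Real.pi by ring] at this
    rw [← this]
    congr 1 with s
    ring_nf
  rw [e] at h; exact h

noncomputable def phiF (x : ℝ) : ℝ := 2 * Agi x - (Real.pi/2) * x

noncomputable def gF (x : ℝ) : ℝ := (Agi x)^2 - (Real.pi/2) * (1 - Real.exp (-x^2/2))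

lemma hexpd (t : ℝ) : HasDerivAt (fun x : ℝ => Real.exp (-x^2/2)) (-t * Real.exp (-t^2/2)) t := by
  have h1 : HasDerivAt (fun x : ℝ => -x^2/2) (-t) t := by
    have := ((hasDerivAt_pow 2 t).neg).div_const 2
    exact this.congr_deriv (by push_cast; ring)
  have := h1.exp
  convert this using 1; ring

lemma hphid (t : ℝ) : HasDerivAt phiF (2 * Real.exp (-t^2/2) - Real.pi/2) t := by
  have := ((hAd t).const_mul 2).sub ((hasDerivAt_id t).const_mul (Real.pi/2))
  exact this.congr_deriv (by ring)

lemma phi_zero : phiF 0 = 0 := by simp [phiF, Agi_zero]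

lemma phi_concave : StrictConcaveOn ℝ (Ici (0:ℝ)) phiF := by
  apply strictConcaveOn_of_deriv2_neg (convex_Ici 0)
  · exact ((continuous_const.mul contA).sub (continuous_const.mul continuous_id)).continuousOn
  · intro t ht
    rw [interior_Ici] at ht
    have hd1 : deriv phiF = fun x => 2 * Real.exp (-x^2/2) - Real.pi/2 :=
      funext fun x => (hphid x).deriv
    have hd2 : HasDerivAt (fun x : ℝ => 2 * Real.exp (-x^2/2) - Real.pi/2)
        (2 * (-t * Real.exp (-t^2/2))) t := ((hexpd t).const_mul 2).sub_const _
    simp only [Function.iterate_succ, Function.iterate_zero, Function.comp_apply, id_eq, hd1]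
    rw [hd2.deriv]
    have ht' : 0 < t := ht
    have he := Real.exp_pos (-t^2/2)
    nlinarith [mul_pos ht' he]

lemma hgd (t : ℝ) : HasDerivAt gF (Real.exp (-t^2/2) * phiF t) t := by
  have h1 : HasDerivAt (fun x => (Agi x)^2) (2 * Agi t ^ 1 * Real.exp (-t^2/2)) t :=
    (hAd t).pow 2
  have h2 := (((hexpd t).const_sub 1).const_mul (Real.pi/2))
  have := h1.sub h2
  refine this.congr_deriv ?_
  simp [phiF]; ring

lemma contG : Continuous gF :=
  ((contA.pow 2).sub (continuous_const.mul (continuous_const.sub contF)))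

lemma gF_zero : gF 0 = 0 := by simp [gF, Agi_zero]

lemma gF_lim : Tendsto gF atTop (𝓝 0) := by
  have h1 : Tendsto (fun x : ℝ => (Agi x)^2) atTop (𝓝 ((Real.sqrt (2*Real.pi)/2)^2)) :=
    hAlim.pow 2
  have hsq : (Real.sqrt (2*Real.pi)/2)^2 = Real.pi/2 := by
    rw [div_pow, Real.sq_sqrt (by positivity)]; ring
  rw [hsq] at h1
  have h2 : Tendsto (fun x : ℝ => Real.exp (-x^2/2)) atTop (𝓝 0) := by
    apply Real.tendsto_exp_atBot.comp
    have : Tendsto (fun x : ℝ => x^2/2) atTop atTop :=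
      (tendsto_pow_atTop two_ne_zero).atTop_div_const (by norm_num)
    have h := tendsto_neg_atTop_atBot.comp this
    convert h using 2 with s
    simp [Function.comp]; ring
  have := h1.sub ((h2.const_sub 1).const_mul (Real.pi/2))
  unfold gF
  simpa using this

lemma gF_pos {x : ℝ} (hx : 0 < x) : 0 < gF x := by
  rcases le_or_gt 0 (phiF x) with hp | hp
  · have key : ∀ t ∈ Ioo 0 x, 0 < phiF t := by
      intro t ht
      obtain ⟨ht0, htx⟩ := ht
      have ha : (0:ℝ) < 1 - t/x := by
        have : t/x < 1 := (div_lt_one hx).mpr htx; linarith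
      have hb : (0:ℝ) < t/x := by positivity
      have hab : (1 - t/x) + t/x = 1 := by ring
      have a := phi_concave.2 (self_mem_Ici) (mem_Ici.mpr hx.le) hx.ne ha hb hab
      rw [phi_zero] at a
      have hpt : (1 - t/x) • (0:ℝ) + (t/x) • x = t := by simp only [smul_eq_mul]; field_simp; ring
      rw [hpt] at a
      simp only [smul_eq_mul, mul_zero, zero_add] at a
      nlinarith [mul_nonneg hb.le hp]
    have hmono : StrictMonoOn gF (Icc 0 x) := by
      apply strictMonoOn_of_deriv_pos (convex_Icc 0 x) contG.continuousOn
      intro t ht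
      rw [interior_Icc] at ht
      rw [(hgd t).deriv]
      exact mul_pos (Real.exp_pos _) (key t ht)
    have := hmono (left_mem_Icc.mpr hx.le) (right_mem_Icc.mpr hx.le) hx
    rwa [gF_zero] at this
  · have key : ∀ t, x < t → phiF t < 0 := by
      intro t hxt
      have ht0 : 0 < t := hx.trans hxt
      have ha : (0:ℝ) < 1 - x/t := by
        have : x/t < 1 := (div_lt_one ht0).mpr hxt; linarith
      have hb : (0:ℝ) < x/t := by positivity
      have hab : (1 - x/t) + x/t = 1 := by ring
      have a := phi_concave.2 (self_mem_Ici) (mem_Ici.mpr ht0.le) ht0.ne ha hb hab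
      rw [phi_zero] at a
      have hpt : (1 - x/t) • (0:ℝ) + (x/t) • t = x := by simp only [smul_eq_mul]; field_simp; ring
      rw [hpt] at a
      simp only [smul_eq_mul, mul_zero, zero_add] at a
      nlinarith
    have hanti : StrictAntiOn gF (Ici x) := by
      apply strictAntiOn_of_deriv_neg (convex_Ici x) contG.continuousOn
      intro t ht
      rw [interior_Ici] at ht
      rw [(hgd t).deriv]
      exact mul_neg_of_pos_of_neg (Real.exp_pos _) (key t ht)
    have h1 : gF (x+1) < gF x :=
      hanti self_mem_Ici (mem_Ici.mpr (by linarith)) (by linarith)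
    have h2 : (0:ℝ) ≤ gF (x+1) := by
      apply le_of_tendsto gF_lim
      filter_upwards [eventually_ge_atTop (x+1)] with t ht
      rcases eq_or_lt_of_le ht with h | h
      · exact le_of_eq (by rw [h])
      · exact (hanti (mem_Ici.mpr (by linarith)) (mem_Ici.mpr (by linarith)) h).le
    linarith

theorem gaussian_integral_lower_bound (x : ℝ) (hx : 0 < x) :
    (1 / Real.sqrt (2 * Real.pi)) * ∫ s in (-x)..x, Real.exp (-s ^ 2 / 2) >
      Real.sqrt (1 - Real.exp (-x ^ 2 / 2)) := by
  have heven : (∫ s in (-x)..x, Real.exp (-s ^ 2 / 2)) = 2 * Agi x := by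
    have hsplit : (∫ s in (-x)..(0:ℝ), Real.exp (-s ^ 2 / 2)) +
        (∫ s in (0:ℝ)..x, Real.exp (-s ^ 2 / 2)) = ∫ s in (-x)..x, Real.exp (-s ^ 2 / 2) :=
      intervalIntegral.integral_add_adjacent_intervals
        intF.intervalIntegrable intF.intervalIntegrable
    have hneg : (∫ s in (-x)..(0:ℝ), Real.exp (-s ^ 2 / 2)) = Agi x := by
      have := intervalIntegral.integral_comp_neg (a := (0:ℝ)) (b := x)
        (f := fun s => Real.exp (-s ^ 2 / 2))
      simp only [neg_neg, neg_zero, neg_sq] at this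
      rw [← this]; rfl
    rw [← hsplit, hneg]
    simp [Agi]; ring
  have hApos : 0 < Agi x := by
    have := Agi_mono hx
    rwa [Agi_zero] at this
  have hg := gF_pos hx
  have hsqrt2pi : (0:ℝ) < Real.sqrt (2 * Real.pi) := Real.sqrt_pos.mpr (by positivity)
  rw [heven, gt_iff_lt]
  rw [show (1 / Real.sqrt (2 * Real.pi)) * (2 * Agi x) = 2 * Agi x / Real.sqrt (2 * Real.pi) by
    ring]
  rw [Real.sqrt_lt' (by positivity)]
  rw [div_pow, Real.sq_sqrt (by positivity)]
  rw [lt_div_iff₀ (by positivity)]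
  have hgx : (Agi x)^2 > (Real.pi/2) * (1 - Real.exp (-x^2/2)) := by
    have : gF x = (Agi x)^2 - (Real.pi/2) * (1 - Real.exp (-x^2/2)) := rfl
    linarith [hg, this ▸ hg]
  nlinarith [Real.pi_pos]
end

section
/- Equivalently to the previous Gaussian bound: for x > 0, Φ(x) > 1/2 + (1/2)·√(1 − e^{−x²/2}), where Φ(x) = (1/√(2π))∫_{−∞}^{x} e^{−s²/2} ds. -/
open Real MeasureTheory Set intervalIntegral Metric

noncomputable def gcI (x : ℝ) : ℝ := ∫ s in (0:ℝ)..x, Real.exp (-s ^ 2 / 2)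

noncomputable def gcJ (x : ℝ) : ℝ :=
  ∫ t in (0:ℝ)..1, Real.exp (-x ^ 2 * (1 + t ^ 2) / 2) / (1 + t ^ 2)

lemma gc_cont : Continuous fun s : ℝ => Real.exp (-s ^ 2 / 2) := by
  continuity

lemma gcI_hasDeriv (x : ℝ) : HasDerivAt gcI (Real.exp (-x ^ 2 / 2)) x := by
  exact integral_hasDerivAt_right (gc_cont.intervalIntegrable 0 x)
    (gc_cont.stronglyMeasurableAtFilter _ _) gc_cont.continuousAt

lemma gcJ_hasDeriv (x : ℝ) :
    HasDerivAt gcJ (∫ t in (0:ℝ)..1, -x * Real.exp (-x ^ 2 * (1 + t ^ 2) / 2)) x := by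
  have h := intervalIntegral.hasDerivAt_integral_of_dominated_loc_of_deriv_le
    (F := fun x t => Real.exp (-x ^ 2 * (1 + t ^ 2) / 2) / (1 + t ^ 2))
    (F' := fun x t => -x * Real.exp (-x ^ 2 * (1 + t ^ 2) / 2))
    (μ := volume) (a := (0:ℝ)) (b := 1) (x₀ := x)
    (bound := fun _ => |x| + 1) (Metric.ball_mem_nhds x one_pos)
    ?_ ?_ ?_ ?_ ?_ ?_
  · exact h.2
  · filter_upwards with y
    apply Continuous.aestronglyMeasurable
    have : ∀ t : ℝ, (0:ℝ) < 1 + t ^ 2 := fun t => by positivity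
    exact (Real.continuous_exp.comp (by continuity)).div (by continuity)
      (fun t => (this t).ne')
  · apply Continuous.intervalIntegrable
    have : ∀ t : ℝ, (0:ℝ) < 1 + t ^ 2 := fun t => by positivity
    exact (Real.continuous_exp.comp (by continuity)).div (by continuity)
      (fun t => (this t).ne')
  · apply Continuous.aestronglyMeasurable
    exact continuous_const.mul (Real.continuous_exp.comp (by continuity))
  · filter_upwards with t _ y hy
    have h1 : Real.exp (-y ^ 2 * (1 + t ^ 2) / 2) ≤ 1 := by
      apply Real.exp_le_one_iff.2
      nlinarith [sq_nonneg y, sq_nonneg t]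
    have h2 : |y| ≤ |x| + 1 := by
      have := mem_ball_iff_norm.1 hy
      have : |y - x| < 1 := this
      calc |y| = |x + (y - x)| := by ring_nf
        _ ≤ |x| + |y - x| := abs_add_le _ _
        _ ≤ |x| + 1 := by linarith
    calc ‖-y * Real.exp (-y ^ 2 * (1 + t ^ 2) / 2)‖
        = |y| * Real.exp (-y ^ 2 * (1 + t ^ 2) / 2) := by
          rw [norm_mul, norm_neg, Real.norm_eq_abs, Real.norm_eq_abs,
            abs_of_pos (Real.exp_pos _)]
      _ ≤ (|x| + 1) * 1 := by
          apply mul_le_mul h2 h1 (Real.exp_pos _).le (by positivity)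
      _ = |x| + 1 := mul_one _
  · exact intervalIntegrable_const
  · filter_upwards with t _ y _
    have h1 : HasDerivAt (fun y : ℝ => -y ^ 2 * (1 + t ^ 2) / 2)
        (-y * (1 + t ^ 2)) y := by
      have : HasDerivAt (fun y : ℝ => y) 1 y := hasDerivAt_id y
      have h := (this.pow 2)
      have h2 : HasDerivAt (fun y : ℝ => -y ^ 2 * (1 + t ^ 2) / 2)
          (-(2 * y ^ 1 * 1) * (1 + t ^ 2) / 2) y := ((h.neg).mul_const _).div_const 2
      convert h2 using 1; ring
    have h3 := (h1.exp).div_const (1 + t ^ 2)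
    have ht : (0:ℝ) < 1 + t ^ 2 := by positivity
    convert h3 using 1
    · rfl
    field_simp

lemma gc_key (x : ℝ) : gcI x ^ 2 + 2 * gcJ x = π / 2 := by
  have hderiv : ∀ y : ℝ, HasDerivAt (fun z => gcI z ^ 2 + 2 * gcJ z) 0 y := by
    intro y
    have hI := gcI_hasDeriv y
    have hJ := gcJ_hasDeriv y
    have hsum := ((hI.pow 2)).add ((hJ.const_mul 2))
    have hval : (2 * gcI y ^ 1 * Real.exp (-y ^ 2 / 2)) +
        2 * ∫ t in (0:ℝ)..1, -y * Real.exp (-y ^ 2 * (1 + t ^ 2) / 2) = 0 := by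
      have hre : (∫ t in (0:ℝ)..1, -y * Real.exp (-y ^ 2 * (1 + t ^ 2) / 2)) =
          -Real.exp (-y ^ 2 / 2) * (y * ∫ t in (0:ℝ)..1, Real.exp (-(y * t) ^ 2 / 2)) := by
        rw [show -Real.exp (-y ^ 2 / 2) * (y * ∫ t in (0:ℝ)..1, Real.exp (-(y * t) ^ 2 / 2))
            = ∫ t in (0:ℝ)..1, (-Real.exp (-y ^ 2 / 2) * y) * Real.exp (-(y * t) ^ 2 / 2) by
          rw [intervalIntegral.integral_const_mul]; ring]
        apply intervalIntegral.integral_congr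
        intro t _
        simp only []
        have he : -y ^ 2 * (1 + t ^ 2) / 2 = -y ^ 2 / 2 + -(y * t) ^ 2 / 2 := by ring
        rw [he, Real.exp_add]
        ring
      have hsub : y * ∫ t in (0:ℝ)..1, Real.exp (-(y * t) ^ 2 / 2) = gcI y := by
        unfold gcI
        have := intervalIntegral.smul_integral_comp_mul_left
          (f := fun s => Real.exp (-s ^ 2 / 2)) (a := (0:ℝ)) (b := 1) y
        simpa [smul_eq_mul] using this
      rw [hre, hsub]
      ring
    rw [← hval]
    exact hsum
  have hconst : ∀ y : ℝ, (fun z => gcI z ^ 2 + 2 * gcJ z) y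
      = (fun z => gcI z ^ 2 + 2 * gcJ z) 0 :=
    fun y => is_const_of_deriv_eq_zero
      (fun z => (hderiv z).differentiableAt)
      (fun z => (hderiv z).deriv) y 0
  have h0 : gcI 0 ^ 2 + 2 * gcJ 0 = π / 2 := by
    have hI0 : gcI 0 = 0 := intervalIntegral.integral_same
    have hJ0 : gcJ 0 = π / 4 := by
      unfold gcJ
      have : ∀ t ∈ uIcc (0:ℝ) 1,
          Real.exp (-(0:ℝ) ^ 2 * (1 + t ^ 2) / 2) / (1 + t ^ 2) = 1 / (1 + t ^ 2) := by
        intro t _; norm_num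
      rw [intervalIntegral.integral_congr this, integral_one_div_one_add_sq]
      simp [Real.arctan_one]
    rw [hI0, hJ0]; ring
  have := hconst x
  simp only at this
  rw [this, h0]

theorem gaussian_cdf_lower_bound (x : ℝ) (hx : 0 < x) :
    (1 / Real.sqrt (2 * Real.pi)) * ∫ s in Set.Iic x, Real.exp (-s ^ 2 / 2) >
      1 / 2 + (1 / 2) * Real.sqrt (1 - Real.exp (-x ^ 2 / 2)) := by
  set e := Real.exp (-x ^ 2 / 2) with he
  have hexp1 : e < 1 := by
    rw [he]; apply Real.exp_lt_one_iff.2; nlinarith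
  have hexp0 : (0:ℝ) < e := Real.exp_pos _
  have hJlt : gcJ x < e * (π / 4) := by
    have h1 : gcJ x = ∫ t in (0:ℝ)..1,
        e * (Real.exp (-(x * t) ^ 2 / 2) / (1 + t ^ 2)) := by
      unfold gcJ
      apply intervalIntegral.integral_congr
      intro t _
      simp only []
      have ha : -x ^ 2 * (1 + t ^ 2) / 2 = -x ^ 2 / 2 + -(x * t) ^ 2 / 2 := by ring
      rw [ha, Real.exp_add, he]
      ring
    rw [h1, intervalIntegral.integral_const_mul]
    have h2 : (∫ t in (0:ℝ)..1, Real.exp (-(x * t) ^ 2 / 2) / (1 + t ^ 2)) < π / 4 := by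
      have hpi : (π / 4 : ℝ) = ∫ t in (0:ℝ)..1, 1 / (1 + t ^ 2) := by
        rw [integral_one_div_one_add_sq]; simp [Real.arctan_one]
      rw [hpi]
      have hpos : ∀ t : ℝ, (0:ℝ) < 1 + t ^ 2 := fun t => by positivity
      apply intervalIntegral.integral_lt_integral_of_continuousOn_of_le_of_exists_lt one_pos
      · exact ((Real.continuous_exp.comp (by continuity)).div (by continuity)
          (fun t => (hpos t).ne')).continuousOn
      · exact (continuous_const.div (by continuity) (fun t => (hpos t).ne')).continuousOn
      · intro t _
        gcongr
        exact Real.exp_le_one_iff.2 (by nlinarith [sq_nonneg (x * t)])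
      · refine ⟨1, by norm_num, ?_⟩
        have h1x : Real.exp (-(x * 1) ^ 2 / 2) < 1 := by
          apply Real.exp_lt_one_iff.2; nlinarith
        have hd : (0:ℝ) < 1 + (1:ℝ) ^ 2 := by norm_num
        exact div_lt_div_of_pos_right h1x hd
    exact mul_lt_mul_of_pos_left h2 hexp0
  have hkey := gc_key x
  have hIpos : 0 < gcI x := by
    apply intervalIntegral_pos_of_pos_on (gc_cont.intervalIntegrable 0 x)
      (fun s _ => Real.exp_pos _) hx
  have hI2 : (π / 2) * (1 - e) < gcI x ^ 2 := by nlinarith [Real.pi_pos]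
  have hint : Integrable (fun s : ℝ => Real.exp (-s ^ 2 / 2)) := by
    have heq : (fun s : ℝ => Real.exp (-s ^ 2 / 2))
        = fun s : ℝ => Real.exp (-(1/2) * s ^ 2) := by
      funext s; ring_nf
    rw [heq]; exact integrable_exp_neg_mul_sq (by norm_num)
  have hsplit : (∫ s in Set.Iic x, Real.exp (-s ^ 2 / 2))
      = (∫ s in Set.Iic (0:ℝ), Real.exp (-s ^ 2 / 2)) + gcI x := by
    have h := intervalIntegral.integral_Iic_sub_Iic (f := fun s : ℝ => Real.exp (-s ^ 2 / 2))
      (μ := volume) (a := (0:ℝ)) (b := x) hint.integrableOn hint.integrableOn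
    unfold gcI; linarith
  have hIic0 : (∫ s in Set.Iic (0:ℝ), Real.exp (-s ^ 2 / 2)) = Real.sqrt (2 * π) / 2 := by
    have h1 : (∫ s in Set.Iic (0:ℝ), Real.exp (-s ^ 2 / 2))
        = ∫ s in Set.Ioi (0:ℝ), Real.exp (-s ^ 2 / 2) := by
      calc (∫ s in Set.Iic (0:ℝ), Real.exp (-s ^ 2 / 2))
          = ∫ s in Set.Iic (0:ℝ), Real.exp (-(-s) ^ 2 / 2) := by
            apply setIntegral_congr_fun measurableSet_Iic
            intro s _; ring_nf
        _ = ∫ s in Set.Ioi (-(0:ℝ)), Real.exp (-s ^ 2 / 2) :=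
            integral_comp_neg_Iic 0 (fun s => Real.exp (-s ^ 2 / 2))
        _ = ∫ s in Set.Ioi (0:ℝ), Real.exp (-s ^ 2 / 2) := by norm_num
    have h2 : (∫ s in Set.Ioi (0:ℝ), Real.exp (-s ^ 2 / 2))
        = Real.sqrt (π / (1/2)) / 2 := by
      have heq : (fun s : ℝ => Real.exp (-s ^ 2 / 2))
          = fun s : ℝ => Real.exp (-(1/2) * s ^ 2) := by
        funext s; ring_nf
      rw [heq]; exact integral_gaussian_Ioi _
    rw [h1, h2, show π / (1/2 : ℝ) = 2 * π by ring]
  rw [hsplit, hIic0]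
  have hs : (0:ℝ) < Real.sqrt (2 * π) := Real.sqrt_pos.2 (by positivity)
  have hIlt : Real.sqrt (2 * π) / 2 * Real.sqrt (1 - e) < gcI x := by
    apply lt_of_pow_lt_pow_left₀ 2 hIpos.le
    have hsq : (Real.sqrt (2 * π) / 2 * Real.sqrt (1 - e)) ^ 2
        = (2 * π) / 4 * (1 - e) := by
      rw [mul_pow, div_pow, Real.sq_sqrt (by positivity), Real.sq_sqrt (by linarith)]
      norm_num
    rw [hsq]; nlinarith
  have hrw : (1 / Real.sqrt (2 * π)) * (Real.sqrt (2 * π) / 2 + gcI x)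
      = 1 / 2 + gcI x / Real.sqrt (2 * π) := by
    field_simp
  rw [gt_iff_lt, hrw]
  have h3 : (1 / 2 : ℝ) * Real.sqrt (1 - e) < gcI x / Real.sqrt (2 * π) := by
    rw [lt_div_iff₀ hs]
    calc (1 / 2 : ℝ) * Real.sqrt (1 - e) * Real.sqrt (2 * π)
        = Real.sqrt (2 * π) / 2 * Real.sqrt (1 - e) := by ring
      _ < gcI x := hIlt
  linarith
end
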